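/- Let p ≥ 3 be a prime and let w be a zero-sum-free arc-labeling of the complete digraph on 3 vertices with values in ZMod p. Then there exists a vertex v and two non-trivial directed paths P_1, P_2 (each of length at least 1) ending at v, such that the three values 0, sum of w over the arcs of P_1, and sum of w over the arcs of P_2 are pairwise distinct. -/
import Mathlib

/-- A directed cycle in the complete digraph on `Fin n`: a list of at least two
pairwise distinct vertices, traversed cyclically. -/
def IsCycle {n : ℕ} (l : List (Fin n)) : Prop :=
  l.Nodup ∧ 2 ≤ l.length

/-- The sum of arc-labels along the cyclic traversal of `l`
(arcs `(v₀,v₁), …, (v_{k-1},v₀)`). -/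
def cycleSum {n : ℕ} {A : Type*} [AddCommMonoid A]
    (w : Fin n → Fin n → A) (l : List (Fin n)) : A :=
  ((l.zip (l.rotate 1)).map fun p => w p.1 p.2).sum

/-- A directed path from `u` to `v`: a list of at least two pairwise distinct
vertices starting at `u` and ending at `v`. -/
def IsPath {n : ℕ} (l : List (Fin n)) (u v : Fin n) : Prop :=
  l.Nodup ∧ 2 ≤ l.length ∧ l.head? = some u ∧ l.getLast? = some v

/-- The sum of arc-labels along the path `l`. -/
def pathSum {n : ℕ} {A : Type*} [AddCommMonoid A]
    (w : Fin n → Fin n → A) (l : List (Fin n)) : A :=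
  ((l.zip l.tail).map fun p => w p.1 p.2).sum

/-- A labeling is zero-sum-free if no directed cycle has arc-labels summing to zero. -/
def ZeroSumFree {n : ℕ} {A : Type*} [AddCommMonoid A] (w : Fin n → Fin n → A) : Prop :=
  ∀ l : List (Fin n), IsCycle l → cycleSum w l ≠ 0

lemma pathSum_comp {p : ℕ} (w : Fin 3 → Fin 3 → ZMod p) (σ : Fin 3 → Fin 3)
    (l : List (Fin 3)) :
    pathSum (fun x y => w (σ x) (σ y)) l = pathSum w (l.map σ) := by
  have h : ((fun p : Fin 3 × Fin 3 => w p.1 p.2) ∘ Prod.map σ σ) =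
      fun p : Fin 3 × Fin 3 => w (σ p.1) (σ p.2) := by funext p; cases p; rfl
  simp [pathSum, ← List.map_tail, List.zip_map, List.map_map, h]

lemma cycleSum_comp {p : ℕ} (w : Fin 3 → Fin 3 → ZMod p) (σ : Fin 3 → Fin 3)
    (l : List (Fin 3)) :
    cycleSum (fun x y => w (σ x) (σ y)) l = cycleSum w (l.map σ) := by
  have h : ((fun p : Fin 3 × Fin 3 => w p.1 p.2) ∘ Prod.map σ σ) =
      fun p : Fin 3 × Fin 3 => w (σ p.1) (σ p.2) := by funext p; cases p; rfl
  simp [cycleSum, ← List.map_rotate, List.zip_map, List.map_map, h]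

lemma isPath_map (σ : Fin 3 → Fin 3) (hσ : Function.Injective σ) (l : List (Fin 3))
    (u v : Fin 3) (h : IsPath l u v) : IsPath (l.map σ) (σ u) (σ v) := by
  obtain ⟨h1, h2, h3, h4⟩ := h
  exact ⟨h1.map hσ, by simpa using h2, by simp [h3], by simp [List.getLast?_map, h4]⟩

lemma stmt4_aux (p : ℕ) (hp : p.Prime) (hp3 : 3 ≤ p)
    (w : Fin 3 → Fin 3 → ZMod p) (hzsf : ZeroSumFree w) (ha : w 0 1 ≠ 0) :
    ∃ (v u₁ u₂ : Fin 3) (P₁ P₂ : List (Fin 3)),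
      IsPath P₁ u₁ v ∧ IsPath P₂ u₂ v ∧
      pathSum w P₁ ≠ 0 ∧ pathSum w P₂ ≠ 0 ∧ pathSum w P₁ ≠ pathSum w P₂ := by
  haveI : Fact p.Prime := ⟨hp⟩
  have ps2 : ∀ x y : Fin 3, pathSum w [x, y] = w x y := by
    intro x y; simp [pathSum]
  have ps3 : ∀ x y z : Fin 3, pathSum w [x, y, z] = w x y + w y z := by
    intro x y z; simp [pathSum]
  have h2 : (2 : ZMod p) ≠ 0 := by
    have : ((2 : ℕ) : ZMod p) ≠ 0 := by
      rw [Ne, ZMod.natCast_eq_zero_iff]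
      intro hdvd
      have := Nat.le_of_dvd (by norm_num) hdvd
      omega
    simpa using this
  have two_ne : ∀ x : ZMod p, x ≠ 0 → x + x ≠ 0 := by
    intro x hx h
    have h' : (2 : ZMod p) * x = 0 := by ring_nf; linear_combination h
    rcases mul_eq_zero.mp h' with h'' | h''
    · exact h2 h''
    · exact hx h''
  have e1 : cycleSum w [0, 1] = w 0 1 + w 1 0 := by simp [cycleSum, List.rotate]
  have e2 : cycleSum w [0, 2] = w 0 2 + w 2 0 := by simp [cycleSum, List.rotate]
  have e3 : cycleSum w [1, 2] = w 1 2 + w 2 1 := by simp [cycleSum, List.rotate]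
  have e4 : cycleSum w [0, 1, 2] = w 0 1 + w 1 2 + w 2 0 := by
    simp [cycleSum, List.rotate]; ring
  have e5 : cycleSum w [0, 2, 1] = w 0 2 + w 2 1 + w 1 0 := by
    simp [cycleSum, List.rotate]; ring
  have C1 : w 0 1 + w 1 0 ≠ 0 := by
    have := hzsf [0, 1] ⟨by decide, by decide⟩; rwa [e1] at this
  have C2 : w 0 2 + w 2 0 ≠ 0 := by
    have := hzsf [0, 2] ⟨by decide, by decide⟩; rwa [e2] at this
  have C3 : w 1 2 + w 2 1 ≠ 0 := by
    have := hzsf [1, 2] ⟨by decide, by decide⟩; rwa [e3] at this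
  have C4 : w 0 1 + w 1 2 + w 2 0 ≠ 0 := by
    have := hzsf [0, 1, 2] ⟨by decide, by decide⟩; rwa [e4] at this
  have C5 : w 0 2 + w 2 1 + w 1 0 ≠ 0 := by
    have := hzsf [0, 2, 1] ⟨by decide, by decide⟩; rwa [e5] at this
  by_cases he : w 1 2 = 0
  · -- e = 0, so f ≠ 0
    have hf : w 2 1 ≠ 0 := fun h => C3 (by linear_combination he + h)
    by_cases haf : w 0 1 = w 2 1
    · -- a = f
      by_cases hca : w 0 2 + w 0 1 = 0
      · -- c + a = 0, so b ≠ 0 ; L2 : v=0, [2,1,0], [1,0]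
        have hb : w 1 0 ≠ 0 := fun h => C5 (by linear_combination hca - haf + h)
        refine ⟨0, 2, 1, [2, 1, 0], [1, 0], ⟨by decide, by decide, rfl, rfl⟩,
          ⟨by decide, by decide, rfl, rfl⟩, ?_, ?_, ?_⟩ <;> simp only [ps2, ps3]
        · exact fun h => C1 (by linear_combination haf + h)
        · exact hb
        · exact fun h => ha (by linear_combination haf + h)
      · by_cases hc : w 0 2 = 0
        · -- c = 0, d ≠ 0
          have hd : w 2 0 ≠ 0 := fun h => C2 (by linear_combination hc + h)
          by_cases hb : w 1 0 = 0
          · by_cases had : w 0 1 = w 2 0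
            · -- L5 : v=1, [2,0,1], [0,1]
              refine ⟨1, 2, 0, [2, 0, 1], [0, 1], ⟨by decide, by decide, rfl, rfl⟩,
                ⟨by decide, by decide, rfl, rfl⟩, ?_, ?_, ?_⟩ <;> simp only [ps2, ps3]
              · exact fun h => two_ne (w 0 1) ha (by linear_combination h + had)
              · exact ha
              · exact fun h => hd (by linear_combination h)
            · -- L4 : v=0, [2,1,0], [2,0]
              refine ⟨0, 2, 2, [2, 1, 0], [2, 0], ⟨by decide, by decide, rfl, rfl⟩,
                ⟨by decide, by decide, rfl, rfl⟩, ?_, ?_, ?_⟩ <;> simp only [ps2, ps3]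
              · exact fun h => ha (by linear_combination haf + h - hb)
              · exact hd
              · exact fun h => had (by linear_combination haf + h - hb)
          · by_cases hbd : w 1 0 = w 2 0
            · -- L7 : v=0, [2,1,0], [1,0]
              refine ⟨0, 2, 1, [2, 1, 0], [1, 0], ⟨by decide, by decide, rfl, rfl⟩,
                ⟨by decide, by decide, rfl, rfl⟩, ?_, ?_, ?_⟩ <;> simp only [ps2, ps3]
              · exact fun h => C1 (by linear_combination haf + h)
              · exact hb
              · exact fun h => ha (by linear_combination haf + h)
            · -- L6 : v=0, [1,0], [2,0]
              refine ⟨0, 1, 2, [1, 0], [2, 0], ⟨by decide, by decide, rfl, rfl⟩,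
                ⟨by decide, by decide, rfl, rfl⟩, ?_, ?_, ?_⟩ <;> simp only [ps2, ps3]
              · exact hb
              · exact hd
              · exact hbd
        · -- L3 : v=1, [0,2,1], [0,1]
          refine ⟨1, 0, 0, [0, 2, 1], [0, 1], ⟨by decide, by decide, rfl, rfl⟩,
            ⟨by decide, by decide, rfl, rfl⟩, ?_, ?_, ?_⟩ <;> simp only [ps2, ps3]
          · exact fun h => hca (by linear_combination h + haf)
          · exact ha
          · exact fun h => hc (by linear_combination h + haf)
    · -- L1 : v=1, [0,1], [2,1]
      refine ⟨1, 0, 2, [0, 1], [2, 1], ⟨by decide, by decide, rfl, rfl⟩,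
        ⟨by decide, by decide, rfl, rfl⟩, ?_, ?_, ?_⟩ <;> simp only [ps2, ps3]
      · exact ha
      · exact hf
      · exact haf
  · -- e ≠ 0
    by_cases hae : w 0 1 + w 1 2 = 0
    · -- a + e = 0
      have hd : w 2 0 ≠ 0 := fun h => C4 (by linear_combination hae + h)
      have hfa : w 2 1 ≠ w 0 1 := fun h => C3 (by linear_combination hae + h)
      by_cases hb : w 1 0 = 0
      · by_cases hfz : w 2 1 = 0
        · have hc : w 0 2 ≠ 0 := fun h => C5 (by linear_combination h + hfz + hb)
          by_cases hce : w 0 2 = w 1 2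
          · -- L11 : v=0, [2,0], [1,2,0]
            refine ⟨0, 2, 1, [2, 0], [1, 2, 0], ⟨by decide, by decide, rfl, rfl⟩,
              ⟨by decide, by decide, rfl, rfl⟩, ?_, ?_, ?_⟩ <;> simp only [ps2, ps3]
            · exact hd
            · exact fun h => C2 (by linear_combination h + hce)
            · exact fun h => he (by linear_combination -h)
          · -- L10 : v=2, [0,2], [1,2]
            refine ⟨2, 0, 1, [0, 2], [1, 2], ⟨by decide, by decide, rfl, rfl⟩,
              ⟨by decide, by decide, rfl, rfl⟩, ?_, ?_, ?_⟩ <;> simp only [ps2, ps3]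
            · exact hc
            · exact he
            · exact hce
        · -- L9 : v=1, [0,1], [2,1]
          refine ⟨1, 0, 2, [0, 1], [2, 1], ⟨by decide, by decide, rfl, rfl⟩,
            ⟨by decide, by decide, rfl, rfl⟩, ?_, ?_, ?_⟩ <;> simp only [ps2, ps3]
          · exact ha
          · exact hfz
          · exact fun h => hfa h.symm
      · by_cases hbd : w 1 0 = w 2 0
        · by_cases hba : w 1 0 = w 0 1
          · have hac : w 0 1 + w 0 2 ≠ 0 := fun h => C2 (by linear_combination h + hba - hbd)
            by_cases h14 : w 1 0 + w 0 2 = w 1 2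
            · -- L15 : v=1, [2,0,1], [0,1]
              refine ⟨1, 2, 0, [2, 0, 1], [0, 1], ⟨by decide, by decide, rfl, rfl⟩,
                ⟨by decide, by decide, rfl, rfl⟩, ?_, ?_, ?_⟩ <;> simp only [ps2, ps3]
              · exact fun h => two_ne (w 0 1) ha (by linear_combination h + hbd - hba)
              · exact ha
              · exact fun h => hd (by linear_combination h)
            · -- L14 : v=2, [1,0,2], [1,2]
              refine ⟨2, 1, 1, [1, 0, 2], [1, 2], ⟨by decide, by decide, rfl, rfl⟩,
                ⟨by decide, by decide, rfl, rfl⟩, ?_, ?_, ?_⟩ <;> simp only [ps2, ps3]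
              · exact fun h => hac (by linear_combination h - hba)
              · exact he
              · exact h14
          · -- L13 : v=0, [1,2,0], [1,0]
            refine ⟨0, 1, 1, [1, 2, 0], [1, 0], ⟨by decide, by decide, rfl, rfl⟩,
              ⟨by decide, by decide, rfl, rfl⟩, ?_, ?_, ?_⟩ <;> simp only [ps2, ps3]
            · exact fun h => hba (by linear_combination hbd + h - hae)
            · exact hb
            · exact fun h => he (by linear_combination h + hbd)
        · -- L12 : v=0, [1,0], [2,0]
          refine ⟨0, 1, 2, [1, 0], [2, 0], ⟨by decide, by decide, rfl, rfl⟩,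
            ⟨by decide, by decide, rfl, rfl⟩, ?_, ?_, ?_⟩ <;> simp only [ps2, ps3]
          · exact hb
          · exact hd
          · exact hbd
    · -- L8 : v=2, [1,2], [0,1,2]
      refine ⟨2, 1, 0, [1, 2], [0, 1, 2], ⟨by decide, by decide, rfl, rfl⟩,
        ⟨by decide, by decide, rfl, rfl⟩, ?_, ?_, ?_⟩ <;> simp only [ps2, ps3]
      · exact he
      · exact hae
      · exact fun h => ha (by linear_combination -h)

theorem stmt4 (p : ℕ) (hp : p.Prime) (hp3 : 3 ≤ p)
    (w : Fin 3 → Fin 3 → ZMod p) (hzsf : ZeroSumFree w) :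
    ∃ (v u₁ u₂ : Fin 3) (P₁ P₂ : List (Fin 3)),
      IsPath P₁ u₁ v ∧ IsPath P₂ u₂ v ∧
      pathSum w P₁ ≠ 0 ∧ pathSum w P₂ ≠ 0 ∧ pathSum w P₁ ≠ pathSum w P₂ := by
  by_cases ha : w 0 1 = 0
  · -- then w 1 0 ≠ 0; apply the aux lemma to the swapped labeling
    have e1 : cycleSum w [0, 1] = w 0 1 + w 1 0 := by simp [cycleSum, List.rotate]
    have C1 : w 0 1 + w 1 0 ≠ 0 := by
      have := hzsf [0, 1] ⟨by decide, by decide⟩; rwa [e1] at this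
    have hb : w 1 0 ≠ 0 := fun h => C1 (by rw [ha, h, add_zero])
    set σ : Fin 3 → Fin 3 := ![1, 0, 2] with hσdef
    have hσ : Function.Injective σ := by decide
    set w' : Fin 3 → Fin 3 → ZMod p := fun x y => w (σ x) (σ y) with hw'
    have hzsf' : ZeroSumFree w' := by
      intro l hl
      rw [hw', cycleSum_comp]
      exact hzsf (l.map σ) ⟨hl.1.map hσ, by simpa using hl.2⟩
    have ha' : w' 0 1 ≠ 0 := hb
    obtain ⟨v, u₁, u₂, P₁, P₂, hP₁, hP₂, h1, h2, h3⟩ := stmt4_aux p hp hp3 w' hzsf' ha'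
    simp only [hw', pathSum_comp] at h1 h2 h3
    exact ⟨σ v, σ u₁, σ u₂, P₁.map σ, P₂.map σ, isPath_map σ hσ P₁ u₁ v hP₁,
      isPath_map σ hσ P₂ u₂ v hP₂, h1, h2, h3⟩
  · exact stmt4_aux p hp hp3 w hzsf ha
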